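/- Let q₁, q₂ : [0,2] → ℍ be continuous paths in the real quaternions with q₁(t) ≠ 0 and q₂(t) ≠ 0 for all t, and suppose that conj(q₁(t))·i·q₁(t) = conj(q₂(t))·i·q₂(t) and conj(q₁(t))·j·q₁(t)/|q₁(t)|² = conj(q₂(t))·j·q₂(t)/|q₂(t)|² for every t ∈ [0,2]. Then either q₂(t) = q₁(t) for all t ∈ [0,2], or q₂(t) = −q₁(t) for all t ∈ [0,2]. (The frame-Hopf map is two-to-one: H(q₁) = H(q₂) if and only if q₁ = ±q₂.) -/

import Mathlib

open scoped Quaternion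

noncomputable section

/-- The quaternion `i`. -/
def qI : ℍ[ℝ] := ⟨0, 1, 0, 0⟩

/-- The quaternion `j`. -/
def qJ : ℍ[ℝ] := ⟨0, 0, 1, 0⟩

open Quaternion

lemma key_pointwise (a b : ℍ[ℝ]) (ha : a ≠ 0) (hb : b ≠ 0)
    (hI : star a * qI * a = star b * qI * b)
    (hV : (star a * qJ * a) / ((‖a‖ ^ 2 : ℝ) : ℍ[ℝ])
        = (star b * qJ * b) / ((‖b‖ ^ 2 : ℝ) : ℍ[ℝ])) :
    b = a ∨ b = -a := by
  have hnsqI : normSq qI = 1 := by rw [normSq_def']; simp [qI]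
  have hnsqJ : normSq qJ = 1 := by rw [normSq_def']; simp [qJ]
  have hnsa : normSq a ≠ 0 := normSq_ne_zero.2 ha
  have hnsb : normSq b ≠ 0 := normSq_ne_zero.2 hb
  -- equal norms
  have h1 : normSq (star a * qI * a) = normSq (star b * qI * b) := by rw [hI]
  simp only [map_mul, normSq_star, hnsqI, mul_one, one_mul] at h1
  have hns : normSq a = normSq b := by
    nlinarith [normSq_nonneg (a := a), normSq_nonneg (a := b)]
  have hnorm : (‖a‖ ^ 2 : ℝ) = ‖b‖ ^ 2 := by
    have := hns
    rw [normSq_eq_norm_mul_self, normSq_eq_norm_mul_self] at this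
    nlinarith
  -- J equation without denominators
  have hJ : star a * qJ * a = star b * qJ * b := by
    rw [hnorm] at hV
    have hd : ((‖b‖ ^ 2 : ℝ) : ℍ[ℝ]) ≠ 0 := by
      intro h
      exact pow_ne_zero 2 (norm_ne_zero_iff.2 hb) (Quaternion.coe_injective (h.trans Quaternion.coe_zero.symm))
    rw [div_eq_mul_inv, div_eq_mul_inv] at hV
    exact mul_right_cancel₀ (inv_ne_zero hd) hV
  -- c = b * star a commutes with qI and qJ
  set c : ℍ[ℝ] := b * star a with hc
  have comm : ∀ x : ℍ[ℝ], star a * x * a = star b * x * b → c * x = x * c := by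
    intro x hx
    have h2 : b * (star a * x * a) * star a = b * (star b * x * b) * star a := by rw [hx]
    have h3 : c * x * ((normSq a : ℝ) : ℍ[ℝ]) = ((normSq b : ℝ) : ℍ[ℝ]) * (x * c) := by
      calc c * x * ((normSq a : ℝ) : ℍ[ℝ]) = b * (star a * x * a) * star a := by
            rw [← self_mul_star a]; simp only [hc, mul_assoc]
        _ = b * (star b * x * b) * star a := h2
        _ = ((normSq b : ℝ) : ℍ[ℝ]) * (x * c) := by
            rw [← self_mul_star b]; simp only [hc, mul_assoc]
    rw [← hns, Quaternion.coe_commutes] at h3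
    have h4 : c * x * ((normSq a : ℝ) : ℍ[ℝ]) = x * c * ((normSq a : ℝ) : ℍ[ℝ]) := h3
    have hcoene : ((normSq a : ℝ) : ℍ[ℝ]) ≠ 0 := by
      intro h
      exact hnsa (Quaternion.coe_injective (h.trans Quaternion.coe_zero.symm))
    exact mul_right_cancel₀ hcoene h4
  have hcI := comm qI hI
  have hcJ := comm qJ hJ
  -- hence c is real
  have eK : c.imK = 0 := by
    have h := congrArg QuaternionAlgebra.imJ hcI
    rw [Quaternion.imJ_mul (a := c), Quaternion.imJ_mul (a := qI)] at h
    simp only [qI] at h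
    norm_num at h
    linarith
  have eJ : c.imJ = 0 := by
    have h := congrArg QuaternionAlgebra.imK hcI
    rw [Quaternion.imK_mul (a := c), Quaternion.imK_mul (a := qI)] at h
    simp only [qI] at h
    norm_num at h
    linarith
  have eI : c.imI = 0 := by
    have h := congrArg QuaternionAlgebra.imK hcJ
    rw [Quaternion.imK_mul (a := c), Quaternion.imK_mul (a := qJ)] at h
    simp only [qJ] at h
    norm_num at h
    linarith
  have hreal : c = ((c.re : ℝ) : ℍ[ℝ]) := by
    ext
    · rfl
    · simpa using eI
    · simpa using eJ
    · simpa using eK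
  -- finish
  have hb' : b * ((normSq a : ℝ) : ℍ[ℝ]) = ((c.re : ℝ) : ℍ[ℝ]) * a := by
    calc b * ((normSq a : ℝ) : ℍ[ℝ]) = b * (star a * a) := by rw [star_mul_self]
      _ = c * a := by rw [hc, mul_assoc]
      _ = ((c.re : ℝ) : ℍ[ℝ]) * a := by rw [← hreal]
  have hr2 : c.re ^ 2 = normSq a ^ 2 := by
    have : normSq c = normSq b * normSq a := by rw [hc, map_mul, normSq_star]
    rw [hreal, normSq_coe] at this
    rw [this, ← hns]; ring
  have hre : c.re = normSq a ∨ c.re = -normSq a := sq_eq_sq_iff_eq_or_eq_neg.mp hr2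
  rcases hre with hre | hre
  · left
    have : b * ((normSq a : ℝ) : ℍ[ℝ]) = a * ((normSq a : ℝ) : ℍ[ℝ]) := by
      rw [hb', hre, Quaternion.coe_commutes]
    exact mul_right_cancel₀ (by intro h; exact hnsa (Quaternion.coe_injective (h.trans Quaternion.coe_zero.symm))) this
  · right
    have : b * ((normSq a : ℝ) : ℍ[ℝ]) = (-a) * ((normSq a : ℝ) : ℍ[ℝ]) := by
      rw [hb', hre, Quaternion.coe_neg, neg_mul, neg_mul, Quaternion.coe_commutes]
    exact mul_right_cancel₀ (by intro h; exact hnsa (Quaternion.coe_injective (h.trans Quaternion.coe_zero.symm))) this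

/-- The frame-Hopf map is two-to-one: if two continuous nonvanishing quaternionic
paths `q₁, q₂ : [0,2] → ℍ` induce the same framed curve data
`γ' = conj(q)·i·q` and `V = conj(q)·j·q/|q|²`, then `q₂ = q₁` or `q₂ = -q₁`. -/
theorem frame_hopf_two_to_one
    (q₁ q₂ : ℝ → ℍ[ℝ])
    (hc₁ : ContinuousOn q₁ (Set.Icc 0 2))
    (hc₂ : ContinuousOn q₂ (Set.Icc 0 2))
    (hne₁ : ∀ t ∈ Set.Icc (0:ℝ) 2, q₁ t ≠ 0)
    (hne₂ : ∀ t ∈ Set.Icc (0:ℝ) 2, q₂ t ≠ 0)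
    (hγ : ∀ t ∈ Set.Icc (0:ℝ) 2,
      star (q₁ t) * qI * q₁ t = star (q₂ t) * qI * q₂ t)
    (hV : ∀ t ∈ Set.Icc (0:ℝ) 2,
      (star (q₁ t) * qJ * q₁ t) / ((‖q₁ t‖ ^ 2 : ℝ) : ℍ[ℝ])
        = (star (q₂ t) * qJ * q₂ t) / ((‖q₂ t‖ ^ 2 : ℝ) : ℍ[ℝ])) :
    (∀ t ∈ Set.Icc (0:ℝ) 2, q₂ t = q₁ t) ∨
    (∀ t ∈ Set.Icc (0:ℝ) 2, q₂ t = -(q₁ t)) := by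
  set h : ℝ → ℝ := fun t => (q₂ t * star (q₁ t)).re with hh
  have hsign : ∀ t ∈ Set.Icc (0:ℝ) 2,
      (q₂ t = q₁ t ∧ 0 < h t) ∨ (q₂ t = -(q₁ t) ∧ h t < 0) := by
    intro t ht
    have hpos : 0 < normSq (q₁ t) :=
      lt_of_le_of_ne (normSq_nonneg (a := q₁ t)) (Ne.symm (normSq_ne_zero.2 (hne₁ t ht)))
    rcases key_pointwise (q₁ t) (q₂ t) (hne₁ t ht) (hne₂ t ht) (hγ t ht) (hV t ht) with he | he
    · left
      refine ⟨he, ?_⟩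
      have : h t = normSq (q₁ t) := by rw [hh]; simp only [he]; rw [← normSq_def]
      rw [this]; exact hpos
    · right
      refine ⟨he, ?_⟩
      have : h t = -normSq (q₁ t) := by
        rw [hh]; simp only [he, neg_mul, Quaternion.re_neg]; rw [← normSq_def]
      rw [this]; linarith
  have hcont : ContinuousOn h (Set.Icc 0 2) :=
    Quaternion.continuous_re.comp_continuousOn (hc₂.mul hc₁.star)
  by_cases hall : ∀ t ∈ Set.Icc (0:ℝ) 2, 0 < h t
  · left
    intro t ht
    rcases hsign t ht with ⟨he, _⟩ | ⟨_, hn⟩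
    · exact he
    · linarith [hall t ht]
  · right
    push_neg at hall
    obtain ⟨t₀, ht₀, hle⟩ := hall
    have ht₀neg : h t₀ < 0 := by
      rcases hsign t₀ ht₀ with ⟨_, hp⟩ | ⟨_, hn⟩
      · linarith
      · exact hn
    intro t ht
    rcases hsign t ht with ⟨he, hp⟩ | ⟨he, _⟩
    · exfalso
      have hsub : Set.uIcc t₀ t ⊆ Set.Icc (0:ℝ) 2 := by
        rw [← Set.uIcc_of_le (by norm_num : (0:ℝ) ≤ 2)]
        exact Set.uIcc_subset_uIcc (by rwa [Set.uIcc_of_le (by norm_num : (0:ℝ) ≤ 2)])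
          (by rwa [Set.uIcc_of_le (by norm_num : (0:ℝ) ≤ 2)])
      have h0 : (0:ℝ) ∈ Set.uIcc (h t₀) (h t) := by
        rw [Set.mem_uIcc]; left; exact ⟨le_of_lt ht₀neg, le_of_lt hp⟩
      obtain ⟨s, hs, hs0⟩ := intermediate_value_uIcc (hcont.mono hsub) h0
      rcases hsign s (hsub hs) with ⟨_, hp'⟩ | ⟨_, hn'⟩ <;> linarith
    · exact he

end
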